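/- The continuous extension f^c of f(x,y,z) = z²·(x²+y²z²−y³)/(x²+y²z²+y⁴) vanishes at every smooth point of the surface S = {x²+y²z²−y³ = 0}, i.e. f^c vanishes on the Euclidean closure of {(x,y,z) ∈ S : y ≠ 0}, but f^c(0,0,z) = z² ≠ 0 for z ≠ 0. -/

import Mathlib

theorem stmt7 (f : ℝ × ℝ × ℝ → ℝ) (hf : Continuous f)
    (hfe : ∀ x y z : ℝ, ¬ (x = 0 ∧ y = 0) →
      f (x, y, z) =
        z ^ 2 * (x ^ 2 + y ^ 2 * z ^ 2 - y ^ 3) / (x ^ 2 + y ^ 2 * z ^ 2 + y ^ 4)) :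
    (∀ p ∈ closure {p : ℝ × ℝ × ℝ |
        p.1 ^ 2 + p.2.1 ^ 2 * p.2.2 ^ 2 - p.2.1 ^ 3 = 0 ∧ p.2.1 ≠ 0}, f p = 0) ∧
    ∀ z : ℝ, z ≠ 0 → f (0, 0, z) ≠ 0 := by
  constructor
  · have heq : Set.EqOn f (fun _ => (0:ℝ))
        {p : ℝ × ℝ × ℝ | p.1 ^ 2 + p.2.1 ^ 2 * p.2.2 ^ 2 - p.2.1 ^ 3 = 0 ∧ p.2.1 ≠ 0} := by
      rintro ⟨x, y, z⟩ ⟨h1, h2⟩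
      simp only [Set.mem_setOf_eq] at h1 h2
      have := hfe x y z (fun h => h2 h.2)
      rw [this, h1]
      simp
    have := heq.closure hf continuous_const
    intro p hp
    exact this hp
  · intro z hz
    have hg : Continuous (fun x : ℝ => f (x, 0, z)) := by
      apply hf.comp
      continuity
    have heq : Set.EqOn (fun x : ℝ => f (x, 0, z)) (fun _ => z ^ 2) {x : ℝ | x ≠ 0} := by
      intro x hx
      simp only [Set.mem_setOf_eq] at hx
      have h := hfe x 0 z (fun h => hx h.1)
      simp only []
      rw [h]
      field_simp
      ring
    have hcl : closure {x : ℝ | x ≠ 0} = Set.univ := by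
      have : Dense {x : ℝ | x ≠ 0} := dense_compl_singleton 0
      exact this.closure_eq
    have := heq.closure hg continuous_const
    have h0 : f (0, 0, z) = z ^ 2 := by
      have := this (by rw [hcl]; trivial : (0:ℝ) ∈ closure {x : ℝ | x ≠ 0})
      simpa using this
    rw [h0]
    positivity
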